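/- For every integer N ≥ 1, the quantity H(N,1/2) = (1/(N·2^N)) Σ_{k=0}^{N} C(N,k) log₂ C(N,k) satisfies the recurrence H(N+1,1/2) = (N/(N+1)) H(N,1/2) + (1/((N+1)·2^{N+1})) Σ_{k=0}^{N} C(N,k) log₂( (N+1)² / ((N+1−k)(k+1)) ). -/

import Mathlib

open Finset

/-- `H(N,1/2) = (1/(N·2^N)) ∑_{k=0}^{N} C(N,k) log₂ C(N,k)`. -/
noncomputable def Hhalf (N : ℕ) : ℝ :=
  (1 / ((N : ℝ) * 2 ^ N)) * ∑ k ∈ Finset.range (N + 1),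
    (N.choose k : ℝ) * Real.logb 2 (N.choose k)

lemma sum_transform (N : ℕ) (g : ℕ → ℝ) :
    ∑ k ∈ Finset.range (N + 2), ((N + 1).choose k : ℝ) * g k =
      ∑ k ∈ Finset.range (N + 1), (N.choose k : ℝ) * (g k + g (k + 1)) := by
  rw [Finset.sum_range_succ' _ (N + 1)]
  have h1 : ∀ k ∈ Finset.range (N + 1), ((N + 1).choose (k + 1) : ℝ) * g (k + 1)
      = (N.choose k : ℝ) * g (k + 1) + (N.choose (k + 1) : ℝ) * g (k + 1) := by
    intro k _
    rw [Nat.choose_succ_succ]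
    push_cast
    ring
  rw [Finset.sum_congr rfl h1, Finset.sum_add_distrib]
  have h2 : ∑ k ∈ Finset.range (N + 1), (N.choose (k + 1) : ℝ) * g (k + 1)
      = ∑ k ∈ Finset.range (N + 1), (N.choose k : ℝ) * g k - (N.choose 0 : ℝ) * g 0 := by
    rw [Finset.sum_range_succ, Finset.sum_range_succ' (fun k => (N.choose k : ℝ) * g k) N]
    simp [Nat.choose_succ_self]
  rw [h2]
  simp [Finset.sum_add_distrib, mul_add]
  ring

lemma ptwise (N k : ℕ) (hk : k ≤ N) :
    Real.logb 2 ((N + 1).choose k) + Real.logb 2 ((N + 1).choose (k + 1)) =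
      2 * Real.logb 2 (N.choose k) +
        Real.logb 2 (((N : ℝ) + 1) ^ 2 / ((((N : ℝ) + 1) - (k : ℝ)) * ((k : ℝ) + 1))) := by
  have hc : (0 : ℝ) < (N.choose k : ℝ) := by exact_mod_cast Nat.choose_pos hk
  have hk1 : (0 : ℝ) < ((N : ℝ) + 1) - k := by
    have : (k : ℝ) ≤ N := by exact_mod_cast hk
    linarith
  have hk2 : (0 : ℝ) < (k : ℝ) + 1 := by positivity
  have hN1 : (0 : ℝ) < (N : ℝ) + 1 := by positivity
  have h1 : ((N + 1).choose k : ℝ) = (N.choose k : ℝ) * (((N : ℝ) + 1) / (((N : ℝ) + 1) - k)) := by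
    have := Nat.choose_mul_succ_eq N k
    have hcast : ((N + 1 - k : ℕ) : ℝ) = ((N : ℝ) + 1) - k := by
      rw [Nat.cast_sub (by omega)]; push_cast; ring
    have hr : (N.choose k : ℝ) * ((N : ℝ) + 1) = ((N + 1).choose k : ℝ) * (((N : ℝ) + 1) - k) := by
      rw [← hcast]; exact_mod_cast this
    field_simp
    linarith [hr]
  have h2 : ((N + 1).choose (k + 1) : ℝ) = (N.choose k : ℝ) * (((N : ℝ) + 1) / ((k : ℝ) + 1)) := by
    have := Nat.add_one_mul_choose_eq N k
    have hr : ((N : ℝ) + 1) * (N.choose k : ℝ) = ((N + 1).choose (k + 1) : ℝ) * ((k : ℝ) + 1) := by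
      exact_mod_cast this
    field_simp
    linarith [hr]
  have hX : (0 : ℝ) < ((N : ℝ) + 1) ^ 2 / ((((N : ℝ) + 1) - (k : ℝ)) * ((k : ℝ) + 1)) := by
    positivity
  have hA : (0 : ℝ) < ((N + 1).choose k : ℝ) := by rw [h1]; positivity
  have hB : (0 : ℝ) < ((N + 1).choose (k + 1) : ℝ) := by rw [h2]; positivity
  rw [← Real.logb_mul hA.ne' hB.ne']
  have hprod : ((N + 1).choose k : ℝ) * ((N + 1).choose (k + 1) : ℝ)
      = (N.choose k : ℝ) ^ 2 *
        (((N : ℝ) + 1) ^ 2 / ((((N : ℝ) + 1) - (k : ℝ)) * ((k : ℝ) + 1))) := by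
    rw [h1, h2]; field_simp
  rw [hprod, Real.logb_mul (by positivity) hX.ne', Real.logb_pow]
  push_cast
  ring

/-- Recurrence for `H(N,1/2)`:
`H(N+1,1/2) = (N/(N+1)) H(N,1/2)
  + (1/((N+1) 2^(N+1))) ∑_{k=0}^{N} C(N,k) log₂((N+1)² / ((N+1−k)(k+1)))`. -/
theorem Hhalf_recurrence (N : ℕ) (hN : 1 ≤ N) :
    Hhalf (N + 1) = ((N : ℝ) / ((N : ℝ) + 1)) * Hhalf N +
      (1 / (((N : ℝ) + 1) * 2 ^ (N + 1))) * ∑ k ∈ Finset.range (N + 1),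
        (N.choose k : ℝ) *
          Real.logb 2 (((N : ℝ) + 1) ^ 2 / ((((N : ℝ) + 1) - (k : ℝ)) * ((k : ℝ) + 1))) := by
  have hNpos : (0 : ℝ) < N := by exact_mod_cast hN
  unfold Hhalf
  rw [sum_transform N (fun k => Real.logb 2 ((N + 1).choose k))]
  have hpt : ∀ k ∈ Finset.range (N + 1),
      (N.choose k : ℝ) * (Real.logb 2 ((N + 1).choose k) + Real.logb 2 ((N + 1).choose (k + 1)))
      = (N.choose k : ℝ) * (2 * Real.logb 2 (N.choose k) +
          Real.logb 2 (((N : ℝ) + 1) ^ 2 / ((((N : ℝ) + 1) - (k : ℝ)) * ((k : ℝ) + 1)))) := by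
    intro k hk
    rw [ptwise N k (by simpa using Nat.lt_succ_iff.mp (Finset.mem_range.mp hk))]
  rw [Finset.sum_congr rfl hpt]
  have hsplit : ∑ k ∈ Finset.range (N + 1), (N.choose k : ℝ) *
      (2 * Real.logb 2 (N.choose k) +
        Real.logb 2 (((N : ℝ) + 1) ^ 2 / ((((N : ℝ) + 1) - (k : ℝ)) * ((k : ℝ) + 1))))
      = 2 * (∑ k ∈ Finset.range (N + 1), (N.choose k : ℝ) * Real.logb 2 (N.choose k)) +
        ∑ k ∈ Finset.range (N + 1), (N.choose k : ℝ) *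
          Real.logb 2 (((N : ℝ) + 1) ^ 2 / ((((N : ℝ) + 1) - (k : ℝ)) * ((k : ℝ) + 1))) := by
    rw [Finset.mul_sum, ← Finset.sum_add_distrib]
    apply Finset.sum_congr rfl
    intro k _
    ring
  rw [hsplit]
  have h2pow : (0 : ℝ) < 2 ^ N := by positivity
  push_cast
  field_simp
  ring
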